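/- For every prime number p and every positive integer k, Cond(V_{p^k}) = p^{k−1} · Cond(V_p). -/

import Mathlib

open Matrix Polynomial BigOperators

/-- The Frobenius norm of a square complex matrix. -/
noncomputable def frobNorm {k : ℕ} (A : Matrix (Fin k) (Fin k) ℂ) : ℝ :=
  Real.sqrt (∑ i, ∑ j, ‖A i j‖ ^ 2)

/-- The condition number `Cond(A) = ‖A‖ ‖A⁻¹‖` (Frobenius norm). -/
noncomputable def condNum {k : ℕ} (A : Matrix (Fin k) (Fin k) ℂ) : ℝ :=
  frobNorm A * frobNorm A⁻¹

/-- The Vandermonde matrix with (i,j) entry `ζ i ^ j` (0-indexed). -/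
def vand {m : ℕ} (ζ : Fin m → ℂ) : Matrix (Fin m) (Fin m) ℂ :=
  Matrix.of fun i j => ζ i ^ (j : ℕ)

/-- The radical of `n`: the product of the distinct prime factors of `n`. -/
def rad (n : ℕ) : ℕ := ∏ p ∈ n.primeFactors, p

/-- The Ramanujan sum `c_n(t)`: the sum of the `t`-th powers of the
primitive `n`-th roots of unity in `ℂ`. -/
noncomputable def ram (n : ℕ) (t : ℤ) : ℂ := ∑ z ∈ primitiveRoots n ℂ, z ^ t

-- sum of d-th powers over all n-th roots of unity
lemma sum_pow_nthRoots (n : ℕ) (hn : 0 < n) (d : ℕ) :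
    ∑ z ∈ nthRootsFinset n (1 : ℂ), z ^ d = if n ∣ d then (n : ℂ) else 0 := by
  have hζ := Complex.isPrimitiveRoot_exp n hn.ne'
  set ζ := Complex.exp (2 * Real.pi * Complex.I / n)
  have himg : nthRootsFinset n (1 : ℂ) = Finset.image (fun i => ζ ^ i) (Finset.range n) := by
    ext z
    simp only [Polynomial.mem_nthRootsFinset hn, Finset.mem_image, Finset.mem_range]
    constructor
    · intro hz
      haveI : NeZero n := ⟨hn.ne'⟩
      obtain ⟨i, hi, rfl⟩ := hζ.eq_pow_of_pow_eq_one hz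
      exact ⟨i, hi, rfl⟩
    · rintro ⟨i, _, rfl⟩
      rw [← pow_mul, mul_comm, pow_mul, hζ.pow_eq_one, one_pow]
  rw [himg, Finset.sum_image (fun i hi j hj h => hζ.pow_inj (Finset.mem_range.1 hi) (Finset.mem_range.1 hj) h)]
  have : ∀ i, (ζ ^ i) ^ d = (ζ ^ d) ^ i := fun i => by rw [← pow_mul, mul_comm, pow_mul]
  simp_rw [this]
  by_cases hd : n ∣ d
  · rw [if_pos hd, (hζ.pow_eq_one_iff_dvd d).2 hd]
    simp
  · rw [if_neg hd]
    have hne : ζ ^ d ≠ 1 := fun h => hd ((hζ.pow_eq_one_iff_dvd d).1 h)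
    rw [geom_sum_eq hne]
    have : (ζ ^ d) ^ n = 1 := by rw [← pow_mul, mul_comm, pow_mul, hζ.pow_eq_one, one_pow]
    rw [this, sub_self, zero_div]

lemma primitiveRoots_prime_pow (p k : ℕ) (hp : p.Prime) (hk : 0 < k) :
    primitiveRoots (p ^ k) ℂ = nthRootsFinset (p ^ k) (1 : ℂ) \ nthRootsFinset (p ^ (k - 1)) (1 : ℂ) := by
  have hpk : 0 < p ^ k := pow_pos hp.pos k
  have hpk1 : 0 < p ^ (k - 1) := pow_pos hp.pos _
  ext z
  simp only [mem_primitiveRoots hpk, Finset.mem_sdiff,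
    Polynomial.mem_nthRootsFinset hpk, Polynomial.mem_nthRootsFinset hpk1]
  constructor
  · intro h
    refine ⟨h.pow_eq_one, fun hz => ?_⟩
    have := (h.pow_eq_one_iff_dvd _).1 hz
    exact absurd (Nat.le_of_dvd hpk1 this)
      (not_le.2 (Nat.pow_lt_pow_right hp.one_lt (Nat.sub_lt hk one_pos)))
  · rintro ⟨h1, h2⟩
    have hdvd : orderOf z ∣ p ^ k := orderOf_dvd_of_pow_eq_one h1
    obtain ⟨j, hj, hjo⟩ := (Nat.dvd_prime_pow hp).1 hdvd
    have hjk : j = k := by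
      by_contra hne
      have hjk1 : j ≤ k - 1 := Nat.le_sub_one_of_lt (lt_of_le_of_ne hj hne)
      exact h2 (orderOf_dvd_iff_pow_eq_one.1 (hjo ▸ pow_dvd_pow p hjk1))
    have : IsPrimitiveRoot z (orderOf z) := IsPrimitiveRoot.orderOf z
    rwa [hjo, hjk] at this

lemma ramsum_prime_pow (p k : ℕ) (hp : p.Prime) (hk : 0 < k) (d : ℕ) :
    ∑ z ∈ primitiveRoots (p ^ k) ℂ, z ^ d =
      (if p ^ k ∣ d then ((p:ℂ) ^ k) else 0) - (if p ^ (k-1) ∣ d then ((p:ℂ) ^ (k-1)) else 0) := by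
  have hsub : nthRootsFinset (p ^ (k-1)) (1 : ℂ) ⊆ nthRootsFinset (p ^ k) (1 : ℂ) := by
    intro z hz
    have hz1 := (Polynomial.mem_nthRootsFinset (pow_pos hp.pos _) (1 : ℂ)).1 hz
    rw [Polynomial.mem_nthRootsFinset (pow_pos hp.pos _) (1 : ℂ)]
    calc z ^ p ^ k = (z ^ p ^ (k-1)) ^ (p ^ (k - (k-1)))  := by
          rw [← pow_mul, ← pow_add, Nat.add_sub_cancel' (Nat.sub_le k 1)]
      _ = 1 := by rw [hz1, one_pow]
  rw [primitiveRoots_prime_pow p k hp hk, Finset.sum_sdiff_eq_sub hsub,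
    sum_pow_nthRoots _ (pow_pos hp.pos _) d, sum_pow_nthRoots _ (pow_pos hp.pos _) d]
  push_cast
  ring

lemma count_mod_card (q c r M : ℕ) (hr : r < q) (hM : M = q * c) :
    ((Finset.univ : Finset (Fin M)).filter (fun t : Fin M => (t : ℕ) % q = r)).card = c := by
  subst hM
  have hq : 0 < q := lt_of_le_of_lt (Nat.zero_le r) hr
  have key : ((Finset.univ : Finset (Fin (q * c))).filter (fun t : Fin (q*c) => (t : ℕ) % q = r)).card = (Finset.univ : Finset (Fin c)).card := by
    refine Finset.card_nbij' (fun t => (⟨(t : ℕ) / q, by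
        have := t.2; exact Nat.div_lt_of_lt_mul this⟩ : Fin c))
      (fun i => (⟨r + (i : ℕ) * q, by
        calc r + (i : ℕ) * q < q + (i : ℕ) * q := by omega
          _ = ((i : ℕ) + 1) * q := by ring
          _ ≤ c * q := Nat.mul_le_mul_right q i.2
          _ = q * c := mul_comm _ _⟩ : Fin (q * c))) ?_ ?_ ?_ ?_
    · intro t ht
      exact Finset.mem_univ _
    · intro i _
      simp only [Finset.mem_coe, Finset.mem_filter, Finset.mem_univ, true_and]
      rw [Nat.add_mul_mod_self_right, Nat.mod_eq_of_lt hr]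
    · intro t ht
      simp only [Finset.mem_coe, Finset.mem_filter] at ht
      apply Fin.ext
      simp only
      rw [← ht.2]
      exact (Nat.mod_add_div' (t : ℕ) q)
    · intro i _
      apply Fin.ext
      simp only
      rw [Nat.add_mul_div_right _ _ hq, Nat.div_eq_of_lt hr, zero_add]
  simpa using key

lemma dvd_iff_mod_eq (n q s t : ℕ) (hn : 0 < n) (hq : q ∣ n) :
    q ∣ (t + (n - 1) * s) ↔ t % q = s % q := by
  have key : t + (n - 1) * s + s = t + n * s := by
    have h1 : (n - 1) + 1 = n := Nat.succ_pred_eq_of_pos hn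
    calc t + (n - 1) * s + s = t + ((n - 1) + 1) * s := by ring
      _ = t + n * s := by rw [h1]
  have hns : n * s ≡ 0 [MOD q] := Nat.modEq_zero_iff_dvd.2 (hq.mul_right s)
  constructor
  · intro h
    have h0 : t + (n - 1) * s ≡ 0 [MOD q] := Nat.modEq_zero_iff_dvd.2 h
    have : t + n * s ≡ 0 + s [MOD q] := key ▸ h0.add_right s
    have ht : t ≡ s [MOD q] := by
      calc t = t + 0 := by ring
        _ ≡ t + n * s [MOD q] := (hns.symm.add_left t)
        _ ≡ 0 + s [MOD q] := this
        _ = s := by ring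
    exact ht
  · intro h
    have ht : t ≡ s [MOD q] := h
    have : t + n * s ≡ s [MOD q] := by
      calc t + n * s ≡ t + 0 [MOD q] := hns.add_left t
        _ = t := by ring
        _ ≡ s [MOD q] := ht
    have h2 : t + (n - 1) * s + s ≡ 0 + s [MOD q] := by
      rw [key]; simpa using this
    exact Nat.modEq_zero_iff_dvd.1 (h2.add_right_cancel' s)

lemma main_lemma (p k n m : ℕ) (hp : p.Prime) (hk : 0 < k) (hn : n = p ^ k)
    (hm : m = n.totient)
    (ζ : Fin m → ℂ) (hinj : Function.Injective ζ)
    (hζ : ∀ i, IsPrimitiveRoot (ζ i) n) :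
    condNum (vand ζ) = (m : ℝ) * Real.sqrt (2 * ((p : ℝ) - 1) / p) := by
  set q := p ^ (k - 1) with hq
  have hq0 : 0 < q := pow_pos hp.pos _
  have hn0 : 0 < n := hn ▸ pow_pos hp.pos _
  have hn1 : 1 < n := by
    rw [hn]; exact Nat.one_lt_pow hk.ne' hp.one_lt
  have hnqp : n = q * p := by
    rw [hn, hq, ← pow_succ]
    congr 1
    omega
  have hmq : m = q * (p - 1) := by
    rw [hm, hn, Nat.totient_prime_pow hp hk]
  have hqn : q ∣ n := ⟨p, hnqp⟩
  have hmn : m < n := hm ▸ Nat.totient_lt n hn1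
  -- all roots have absolute value 1
  have habs : ∀ i, ‖ζ i‖ = 1 := fun i =>
    Complex.norm_eq_one_of_pow_eq_one (hζ i).pow_eq_one hn0.ne'
  -- the image of ζ is exactly the set of primitive n-th roots
  have himg : Finset.image ζ Finset.univ = primitiveRoots n ℂ := by
    apply Finset.eq_of_subset_of_card_le
    · intro z hz
      obtain ⟨i, _, rfl⟩ := Finset.mem_image.1 hz
      exact (mem_primitiveRoots hn0).2 (hζ i)
    · rw [Finset.card_image_of_injective _ hinj, Finset.card_univ, Fintype.card_fin,
        Complex.card_primitiveRoots, hm]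
  have hsum : ∀ d : ℕ, ∑ i, ζ i ^ d =
      (if n ∣ d then ((n : ℂ)) else 0) - (if q ∣ d then ((q : ℂ)) else 0) := by
    intro d
    have := Finset.sum_image (g := ζ) (f := fun z : ℂ => z ^ d)
      (s := (Finset.univ : Finset (Fin m))) (fun i _ j _ h => hinj h)
    rw [← this, himg, hn, hq, ramsum_prime_pow p k hp hk d]
    push_cast
    norm_num
  -- Frobenius norm of the Vandermonde matrix
  have hfrobV : frobNorm (vand ζ) = m := by
    have : ∀ i j : Fin m, ‖vand ζ i j‖ ^ 2 = 1 := by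
      intro i j
      rw [vand, Matrix.of_apply, norm_pow, habs, one_pow, one_pow]
    rw [frobNorm]
    simp only [this, Finset.sum_const, Finset.card_univ, Fintype.card_fin, nsmul_eq_mul, mul_one]
    exact Real.sqrt_mul_self (Nat.cast_nonneg m)
  -- conjugate of a root
  have hconj : ∀ i, (starRingEnd ℂ) (ζ i) = ζ i ^ (n - 1) := by
    intro i
    rw [← Complex.inv_eq_conj (habs i)]
    apply inv_eq_of_mul_eq_one_right
    have h11 : n - 1 + 1 = n := by omega
    rw [← pow_succ', h11]
    exact (hζ i).pow_eq_one
  -- the Gram matrix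
  have hH : ∀ s t : Fin m, ((vand ζ)ᴴ * vand ζ) s t =
      (if s = t then (n : ℂ) else 0) - (if (t : ℕ) % q = (s : ℕ) % q then (q : ℂ) else 0) := by
    intro s t
    rw [Matrix.mul_apply]
    have hterm : ∀ i, (vand ζ)ᴴ s i * vand ζ i t = ζ i ^ ((t : ℕ) + (n - 1) * (s : ℕ)) := by
      intro i
      rw [Matrix.conjTranspose_apply, vand, Matrix.of_apply, Matrix.of_apply,
        show star (ζ i ^ (s : ℕ)) = (starRingEnd ℂ) (ζ i ^ (s : ℕ)) from rfl, map_pow,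
        hconj i, ← pow_mul, ← pow_add, add_comm]
    rw [Finset.sum_congr rfl (fun i _ => hterm i), hsum]
    have h1 : (n ∣ ((t : ℕ) + (n - 1) * (s : ℕ))) ↔ s = t := by
      rw [dvd_iff_mod_eq n n (s : ℕ) (t : ℕ) hn0 dvd_rfl,
        Nat.mod_eq_of_lt (lt_trans t.isLt hmn), Nat.mod_eq_of_lt (lt_trans s.isLt hmn)]
      exact ⟨fun h => (Fin.ext h.symm), fun h => congrArg Fin.val h.symm⟩
    have h2 : (q ∣ ((t : ℕ) + (n - 1) * (s : ℕ))) ↔ (t : ℕ) % q = (s : ℕ) % q :=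
      dvd_iff_mod_eq n q (s : ℕ) (t : ℕ) hn0 hqn
    simp only [h1, h2]
  -- the explicit inverse of the Gram matrix
  set B : Matrix (Fin m) (Fin m) ℂ := Matrix.of (fun s t =>
    ((if s = t then (1:ℂ) else 0) + (if (t : ℕ) % q = (s : ℕ) % q then (1:ℂ) else 0)) / n)
    with hBdef
  have hHB : ((vand ζ)ᴴ * vand ζ) * B = 1 := by
    ext s u
    rw [Matrix.mul_apply, Matrix.one_apply]
    have e1 : ∀ t : Fin m, ((vand ζ)ᴴ * vand ζ) s t * B t u =
        ((n:ℂ) * ((if s = t then (1:ℂ) else 0) * (if t = u then (1:ℂ) else 0))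
        + (n:ℂ) * ((if s = t then (1:ℂ) else 0) * (if (u:ℕ) % q = (t:ℕ) % q then (1:ℂ) else 0))
        - (q:ℂ) * ((if (t:ℕ) % q = (s:ℕ) % q then (1:ℂ) else 0) * (if t = u then (1:ℂ) else 0))
        - (q:ℂ) * ((if (t:ℕ) % q = (s:ℕ) % q then (1:ℂ) else 0) *
            (if (u:ℕ) % q = (t:ℕ) % q then (1:ℂ) else 0))) / n := by
      intro t
      rw [hH s t, hBdef]
      simp only [Matrix.of_apply]
      split_ifs <;> ring
    rw [Finset.sum_congr rfl (fun t _ => e1 t), ← Finset.sum_div]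
    rw [Finset.sum_sub_distrib, Finset.sum_sub_distrib, Finset.sum_add_distrib,
      ← Finset.mul_sum, ← Finset.mul_sum, ← Finset.mul_sum, ← Finset.mul_sum]
    have S1 : ∑ t : Fin m, (if s = t then (1:ℂ) else 0) * (if t = u then (1:ℂ) else 0)
        = (if s = u then (1:ℂ) else 0) := by
      simp only [ite_mul, one_mul, zero_mul]
      rw [Finset.sum_ite_eq]
      simp
    have S2 : ∑ t : Fin m, (if s = t then (1:ℂ) else 0) *
        (if (u:ℕ) % q = (t:ℕ) % q then (1:ℂ) else 0)
        = (if (u:ℕ) % q = (s:ℕ) % q then (1:ℂ) else 0) := by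
      simp only [ite_mul, one_mul, zero_mul]
      rw [Finset.sum_ite_eq]
      simp
    have S3 : ∑ t : Fin m, (if (t:ℕ) % q = (s:ℕ) % q then (1:ℂ) else 0) *
        (if t = u then (1:ℂ) else 0)
        = (if (u:ℕ) % q = (s:ℕ) % q then (1:ℂ) else 0) := by
      simp only [mul_ite, mul_one, mul_zero]
      rw [Finset.sum_ite_eq']
      simp
    have S4 : ∑ t : Fin m, (if (t:ℕ) % q = (s:ℕ) % q then (1:ℂ) else 0) *
        (if (u:ℕ) % q = (t:ℕ) % q then (1:ℂ) else 0)
        = (if (u:ℕ) % q = (s:ℕ) % q then (((p - 1 : ℕ)):ℂ) else 0) := by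
      by_cases hus : (u:ℕ) % q = (s:ℕ) % q
      · rw [if_pos hus]
        have e2 : ∀ t : Fin m, (if (t:ℕ) % q = (s:ℕ) % q then (1:ℂ) else 0) *
            (if (u:ℕ) % q = (t:ℕ) % q then (1:ℂ) else 0)
            = (if (t:ℕ) % q = (s:ℕ) % q then (1:ℂ) else 0) := by
          intro t
          by_cases h : (t:ℕ) % q = (s:ℕ) % q
          · rw [if_pos h, if_pos (hus.trans h.symm), one_mul]
          · rw [if_neg h, zero_mul]
        rw [Finset.sum_congr rfl (fun t _ => e2 t), Finset.sum_boole,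
          count_mod_card q (p-1) ((s:ℕ)%q) m (Nat.mod_lt _ hq0) hmq]
      · rw [if_neg hus]
        apply Finset.sum_eq_zero
        intro t _
        by_cases h : (t:ℕ) % q = (s:ℕ) % q
        · rw [if_neg (fun hut : (u:ℕ) % q = (t:ℕ) % q => hus (hut.trans h)), mul_zero]
        · rw [if_neg h, zero_mul]
    rw [S1, S2, S3, S4]
    have hnC : (n:ℂ) = (q:ℂ) * p := by rw [hnqp]; push_cast; ring
    have hnC0 : (n:ℂ) ≠ 0 := Nat.cast_ne_zero.2 hn0.ne'
    have hp1 : ((p - 1 : ℕ):ℂ) = (p:ℂ) - 1 := by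
      rw [Nat.cast_sub hp.one_le, Nat.cast_one]
    by_cases hsu : s = u
    · have husq : (u:ℕ) % q = (s:ℕ) % q := by rw [hsu]
      simp only [if_pos hsu, if_pos husq, mul_one]
      rw [hp1, hnC]
      have hqC0 : (q:ℂ) ≠ 0 := Nat.cast_ne_zero.2 hq0.ne'
      have hpC0 : (p:ℂ) ≠ 0 := Nat.cast_ne_zero.2 hp.pos.ne'
      field_simp
      ring
    · by_cases husq : (u:ℕ) % q = (s:ℕ) % q
      · simp only [if_neg hsu, if_pos husq, mul_zero, mul_one, zero_add]
        rw [_root_.div_eq_zero_iff]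
        left
        rw [hnC, hp1]
        ring
      · simp only [if_neg hsu, if_neg husq, mul_zero]
        norm_num
  -- inverse of the Vandermonde matrix
  have hBH : B * ((vand ζ)ᴴ * vand ζ) = 1 := mul_eq_one_comm.1 hHB
  have hVinv : (vand ζ)⁻¹ = B * (vand ζ)ᴴ := by
    apply Matrix.inv_eq_left_inv
    rw [Matrix.mul_assoc]
    exact hBH
  -- trace formula for the Frobenius norm of the inverse
  have htr : (∑ i : Fin m, ∑ j : Fin m, ((‖(vand ζ)⁻¹ i j‖ : ℂ)) ^ 2)
      = Matrix.trace ((vand ζ)⁻¹ * ((vand ζ)⁻¹)ᴴ) := by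
    rw [Matrix.trace]
    apply Finset.sum_congr rfl
    intro i _
    rw [Matrix.diag_apply, Matrix.mul_apply]
    apply Finset.sum_congr rfl
    intro j _
    rw [Matrix.conjTranspose_apply,
      show star ((vand ζ)⁻¹ i j) = (starRingEnd ℂ) ((vand ζ)⁻¹ i j) from rfl,
      Complex.mul_conj]
    rw [← Complex.sq_norm]
    push_cast
    ring
  have htrB : Matrix.trace ((vand ζ)⁻¹ * ((vand ζ)⁻¹)ᴴ) = Matrix.trace Bᴴ := by
    rw [hVinv, Matrix.conjTranspose_mul, Matrix.conjTranspose_conjTranspose]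
    rw [Matrix.mul_assoc B, ← Matrix.mul_assoc ((vand ζ)ᴴ) (vand ζ) Bᴴ,
      ← Matrix.mul_assoc B, hBH, Matrix.one_mul]
  have htrBval : Matrix.trace Bᴴ = 2 * (m : ℂ) / n := by
    rw [Matrix.trace]
    have hdiag : ∀ s : Fin m, (Bᴴ).diag s = 2 / (n:ℂ) := by
      intro s
      rw [Matrix.diag_apply, Matrix.conjTranspose_apply, hBdef, Matrix.of_apply,
        if_pos rfl, if_pos rfl]
      simp [star_div₀, ← Complex.ofReal_natCast]
      norm_num
    rw [Finset.sum_congr rfl (fun s _ => hdiag s), Finset.sum_const, Finset.card_univ,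
      Fintype.card_fin, nsmul_eq_mul]
    ring
  -- the sum of squared absolute values of the inverse entries
  have hsum2 : (∑ i : Fin m, ∑ j : Fin m, ‖(vand ζ)⁻¹ i j‖ ^ 2)
      = 2 * (m:ℝ) / n := by
    apply Complex.ofReal_injective
    push_cast
    rw [htr, htrB, htrBval]
  -- conclusion
  rw [condNum, hfrobV, frobNorm, hsum2]
  congr 1
  rw [hmq, hnqp]
  have hp1R : ((p - 1 : ℕ):ℝ) = (p:ℝ) - 1 := by
    rw [Nat.cast_sub hp.one_le, Nat.cast_one]
  have hqR0 : ((q:ℝ)) ≠ 0 := Nat.cast_ne_zero.2 hq0.ne'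
  have hpR0 : ((p:ℝ)) ≠ 0 := Nat.cast_ne_zero.2 hp.pos.ne'
  congr 1
  push_cast [hp1R]
  field_simp


/-- For every prime `p` and every positive integer `k`,
`Cond(V_{p^k}) = p^(k-1) * Cond(V_p)`. -/
theorem cond_vand_prime_pow_eq (p k : ℕ) (hp : p.Prime) (hk : 0 < k)
    (ζ : Fin (p ^ k).totient → ℂ) (hζinj : Function.Injective ζ)
    (hζ : ∀ i, IsPrimitiveRoot (ζ i) (p ^ k))
    (ξ : Fin p.totient → ℂ) (hξinj : Function.Injective ξ)
    (hξ : ∀ i, IsPrimitiveRoot (ξ i) p) :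
    condNum (vand ζ) = ((p : ℝ)) ^ (k - 1) * condNum (vand ξ) := by
  have h1 := main_lemma p k (p ^ k) ((p ^ k).totient) hp hk rfl rfl ζ hζinj hζ
  have h2 := main_lemma p 1 p p.totient hp one_pos (pow_one p).symm rfl ξ hξinj hξ
  rw [h1, h2, Nat.totient_prime_pow hp hk, Nat.totient_prime hp, Nat.cast_mul, Nat.cast_pow]
  ring
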